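/- Let q be a prime power, 1 ≤ k < n, and let S ⊆ G_q(k,n) be a sunflower with center Z of dimension c, 0 ≤ c ≤ k−1, such that span(S) = F_q^n. If n > 2k − c, then S^⊥ is not a sunflower. -/

import Mathlib

open Submodule Module Set

/-- The orthogonal complement of a subspace of `Fin n → F` with respect to the
standard bilinear form `(x, y) ↦ ∑ i, x i * y i`. -/
def stdOrth {F : Type} [Field F] {n : ℕ} (U : Submodule F (Fin n → F)) :
    Submodule F (Fin n → F) where
  carrier := {x | ∀ y ∈ U, ∑ i, x i * y i = 0}
  add_mem' := by
    intro a b ha hb y hy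
    simp only [Set.mem_setOf_eq] at *
    simp [add_mul, Finset.sum_add_distrib, ha y hy, hb y hy]
  zero_mem' := by intro y hy; simp
  smul_mem' := by
    intro c a ha y hy
    simp only [Set.mem_setOf_eq] at *
    simp [smul_eq_mul, mul_assoc, ← Finset.mul_sum, ha y hy]

/-- An equidistant `c`-intersecting subspace code of constant dimension `k` in `F^n`:
a set of at least two `k`-dimensional subspaces, any two distinct members of which
intersect in dimension `c`. -/
def IsEquidistantCode (F : Type) [Field F] (n k c : ℕ)
    (C : Set (Submodule F (Fin n → F))) : Prop :=
  2 ≤ C.ncard ∧ (∀ U ∈ C, Module.finrank F U = k) ∧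
    ∀ U ∈ C, ∀ V ∈ C, U ≠ V → Module.finrank F ↥(U ⊓ V) = c

/-- A set of subspaces is a sunflower if there is a common center `Z` equal to the
intersection of any two distinct members. -/
def IsSunflower {F : Type} [Field F] {n : ℕ} (C : Set (Submodule F (Fin n → F))) : Prop :=
  ∃ Z : Submodule F (Fin n → F), ∀ U ∈ C, ∀ V ∈ C, U ≠ V → U ⊓ V = Z

/-- `eMax F n k c` is the maximum cardinality of an equidistant `c`-intersecting
code of constant dimension `k` in `F^n`. -/
noncomputable def eMax (F : Type) [Field F] (n k c : ℕ) : ℕ :=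
  sSup {m | ∃ C : Set (Submodule F (Fin n → F)), IsEquidistantCode F n k c C ∧ C.ncard = m}


section Aux

variable {F : Type} [Field F] {n : ℕ}

/-- The standard bilinear form on `Fin n → F`. -/
noncomputable def stdB (F : Type) [Field F] (n : ℕ) : LinearMap.BilinForm F (Fin n → F) :=
  LinearMap.mk₂ F (fun x y => ∑ i, x i * y i)
    (by intros; simp [add_mul, Finset.sum_add_distrib])
    (by intros; simp [smul_eq_mul, mul_assoc, Finset.mul_sum])
    (by intros; simp [mul_add, Finset.sum_add_distrib])
    (by intros m c y; simp only [smul_eq_mul, Finset.mul_sum]; exact Finset.sum_congr rfl fun i _ => by simp only [Pi.smul_apply, smul_eq_mul]; ring)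

@[simp] lemma stdB_apply (x y : Fin n → F) : stdB F n x y = ∑ i, x i * y i := rfl

lemma stdB_symm (x y : Fin n → F) : stdB F n x y = stdB F n y x := by
  simp [mul_comm]

lemma stdB_refl : (stdB F n).IsRefl := by
  intro x y h
  rwa [stdB_symm]

lemma stdB_nondeg : (stdB F n).Nondegenerate := by
  refine (LinearMap.IsRefl.nondegenerate_iff_separatingLeft (B := stdB F n) stdB_refl).mpr ?_
  intro x hx
  funext i
  have := hx (Pi.single i 1)
  simpa [Pi.single_apply, Finset.sum_ite_eq', mul_comm] using this

lemma stdOrth_eq (U : Submodule F (Fin n → F)) :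
    stdOrth U = (stdB F n).orthogonal U := by
  ext x
  constructor
  · intro hx y hy
    have := hx y hy
    simpa [LinearMap.BilinForm.IsOrtho, mul_comm] using this
  · intro hx y hy
    have := hx y hy
    simpa [LinearMap.BilinForm.IsOrtho, mul_comm] using this

lemma stdOrth_stdOrth (U : Submodule F (Fin n → F)) :
    stdOrth (stdOrth U) = U := by
  rw [stdOrth_eq, stdOrth_eq]
  exact (stdB F n).orthogonal_orthogonal stdB_nondeg stdB_refl U

lemma stdOrth_injective : Function.Injective (stdOrth (F := F) (n := n)) := by
  intro U V h
  rw [← stdOrth_stdOrth U, h, stdOrth_stdOrth]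

lemma stdOrth_inf (U V : Submodule F (Fin n → F)) :
    stdOrth U ⊓ stdOrth V = stdOrth (U ⊔ V) := by
  apply le_antisymm
  · rintro x ⟨hxU, hxV⟩ y hy
    rw [Submodule.mem_sup] at hy
    obtain ⟨u, hu, v, hv, rfl⟩ := hy
    have h1 := hxU u hu
    have h2 := hxV v hv
    simp only [Pi.add_apply, mul_add, Finset.sum_add_distrib, h1, h2, add_zero]
  · intro x hx
    exact ⟨fun y hy => hx y (Submodule.mem_sup_left hy),
           fun y hy => hx y (Submodule.mem_sup_right hy)⟩

end Aux

/-- If a sunflower `S ⊆ G_q(k,n)` with center of dimension `c` spans `F_q^n` and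
`n > 2k - c`, then `S^⊥` is not a sunflower. -/
theorem orth_of_spanning_sunflower_not_sunflower
    (q : ℕ) (hq : IsPrimePow q) (F : Type) [Field F] [Fintype F]
    (hF : Fintype.card F = q) (k n c : ℕ) (hk : 1 ≤ k) (hkn : k < n) (hc : c ≤ k - 1)
    (S : Set (Submodule F (Fin n → F))) (Z : Submodule F (Fin n → F))
    (hcard : 2 ≤ S.ncard) (hdim : ∀ U ∈ S, Module.finrank F U = k)
    (hZ : ∀ U ∈ S, ∀ V ∈ S, U ≠ V → U ⊓ V = Z) (hZdim : Module.finrank F Z = c)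
    (hspan : sSup S = ⊤) (hn : 2 * k < n + c) :
    ¬ IsSunflower (stdOrth '' S) := by
  rintro ⟨Z', hZ'⟩
  classical
  have hSfin : S.Finite := by
    by_contra h
    rw [Set.Infinite.ncard h] at hcard; omega
  -- key: for distinct U V in S, U ⊔ V = stdOrth Z'
  have key : ∀ U ∈ S, ∀ V ∈ S, U ≠ V → U ⊔ V = stdOrth Z' := by
    intro U hU V hV hUV
    have h1 : stdOrth U ⊓ stdOrth V = Z' :=
      hZ' _ ⟨U, hU, rfl⟩ _ ⟨V, hV, rfl⟩ (fun h => hUV (stdOrth_injective h))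
    rw [stdOrth_inf] at h1
    rw [← stdOrth_stdOrth (U ⊔ V), h1]
  obtain ⟨U, V, hU, hV, hUV⟩ := (Set.one_lt_ncard_iff hSfin).mp (by omega)
  -- stdOrth Z' = ⊤
  have htop : stdOrth Z' = ⊤ := by
    rw [← hspan]
    apply le_antisymm
    · rw [← key U hU V hV hUV]
      exact sup_le (le_sSup hU) (le_sSup hV)
    · apply sSup_le
      intro W hW
      obtain ⟨W', hW', hWW'⟩ := Set.exists_ne_of_one_lt_ncard (show 1 < S.ncard by omega) W
      rw [← key W hW W' hW' (Ne.symm hWW')]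
      exact le_sup_left
  have hsum : U ⊔ V = ⊤ := (key U hU V hV hUV).trans htop
  have hinf : U ⊓ V = Z := hZ U hU V hV hUV
  have hdimeq := Submodule.finrank_sup_add_finrank_inf_eq U V
  rw [hsum, hinf, hZdim, hdim U hU, hdim V hV, finrank_top,
    Module.finrank_fin_fun] at hdimeq
  omega
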